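/- Every computably enumerable non-computable set A ⊆ ℕ can be split into two disjoint computably enumerable recursively inseparable sets: there exist c.e. sets A₀, A₁ with A₀ ∩ A₁ = ∅, A₀ ∪ A₁ = A, and A₀, A₁ recursively inseparable. -/

import Mathlib

/-- Partial functions `ℕ →. ℕ` computable relative to an oracle `O : ℕ →. ℕ`
(the oracle analogue of `Nat.Partrec`). -/
inductive OracleRecursiveIn (O : ℕ →. ℕ) : (ℕ →. ℕ) → Prop
  | oracle : OracleRecursiveIn O O
  | zero : OracleRecursiveIn O (pure 0)
  | succ : OracleRecursiveIn O ↑Nat.succ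
  | left : OracleRecursiveIn O ↑fun n : ℕ => n.unpair.1
  | right : OracleRecursiveIn O ↑fun n : ℕ => n.unpair.2
  | pair {f g : ℕ →. ℕ} : OracleRecursiveIn O f → OracleRecursiveIn O g →
      OracleRecursiveIn O fun n => Nat.pair <$> f n <*> g n
  | comp {f g : ℕ →. ℕ} : OracleRecursiveIn O f → OracleRecursiveIn O g →
      OracleRecursiveIn O fun n => g n >>= f
  | prec {f g : ℕ →. ℕ} : OracleRecursiveIn O f → OracleRecursiveIn O g →
      OracleRecursiveIn O (Nat.unpaired fun a n =>
        n.rec (f a) fun y IH => do let i ← IH; g (Nat.pair a (Nat.pair y i)))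
  | rfind {f : ℕ →. ℕ} : OracleRecursiveIn O f →
      OracleRecursiveIn O fun a => Nat.rfind fun n => (fun m => m = 0) <$> f (Nat.pair a n)

open Classical in
/-- The characteristic function of a set of naturals, as a partial function. -/
noncomputable def Set.chi (A : Set ℕ) : ℕ →. ℕ :=
  fun n => Part.some (if n ∈ A then 1 else 0)

/-- Turing reducibility for sets of naturals. -/
def TRed (A B : Set ℕ) : Prop := OracleRecursiveIn B.chi A.chi

/-- Turing incomparability. -/
def TIncomp (A B : Set ℕ) : Prop := ¬ TRed A B ∧ ¬ TRed B A

/-- A set is computably enumerable if it is the domain of a partial computable function. -/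
def CE (A : Set ℕ) : Prop := ∃ f : ℕ →. ℕ, Partrec f ∧ ∀ n, n ∈ A ↔ (f n).Dom

/-- Two sets are recursively inseparable if no computable set separates them. -/
def RecInsep (A B : Set ℕ) : Prop :=
  ¬ ∃ D : Set ℕ, ComputablePred (· ∈ D) ∧ A ⊆ D ∧ B ∩ D = ∅

/-- `D` is a separator for the pair `⟨A, B⟩`. -/
def Separator (A B D : Set ℕ) : Prop := A ⊆ D ∧ B ∩ D = ∅

/-- The halting problem `∅′`. -/
def haltingSet : Set ℕ :=
  {e | ((Denumerable.ofNat Nat.Partrec.Code e).eval e).Dom}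


namespace Stmt15Aux

open Nat.Partrec Nat.Partrec.Code Denumerable

/-- `n` enters the enumeration of `dom (eval c)` exactly at stage `s`. -/
def enterB (c : Code) (n s : ℕ) : Bool :=
  (evaln (s+1) c n).isSome && !(evaln s c n).isSome

def memB (e : ℕ) (E : List ℕ) : Bool := E.foldr (fun x b => (x == e) || b) false

lemma memB_iff {e : ℕ} {E : List ℕ} : memB e E = true ↔ e ∈ E := by
  induction E with
  | nil => simp [memB]
  | cons x E ih =>
    show ((x == e) || memB e E) = true ↔ _
    simp [ih, List.mem_cons, eq_comm (a := x)]

def predB (c : Code) (n t : ℕ) (E : List ℕ) (e : ℕ) : Bool :=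
  !(memB e E) && (evaln t (ofNat Code e) n).isSome

def pickAux (c : Code) (n t : ℕ) (E : List ℕ) : ℕ → Option ℕ := fun k =>
  Nat.rec Option.none (fun e ih =>
    Option.casesOn ih (cond (predB c n t E e) (some e) Option.none) some) k

lemma pickAux_succ (c : Code) (n t : ℕ) (E : List ℕ) (k : ℕ) :
    pickAux c n t E (k+1) =
      Option.casesOn (pickAux c n t E k) (cond (predB c n t E k) (some k) Option.none) some := rfl

lemma pickAux_none {c n t E k} (h : pickAux c n t E k = Option.none) :
    ∀ e < k, predB c n t E e = false := by
  induction k with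
  | zero => intro e he; omega
  | succ k ih =>
    intro e he
    rw [pickAux_succ] at h
    cases hk : pickAux c n t E k with
    | some e' => rw [hk] at h; simp at h
    | none =>
      rw [hk] at h
      rcases Nat.lt_succ_iff_lt_or_eq.1 he with h' | rfl
      · exact ih hk e h'
      · cases hp : predB c n t E e
        · rfl
        · rw [hp] at h; simp at h

lemma pickAux_spec {c n t E k e} (h : pickAux c n t E k = some e) :
    predB c n t E e = true ∧ e < k ∧ ∀ e' < e, predB c n t E e' = false := by
  induction k with
  | zero => simp [pickAux] at h
  | succ k ih =>
    rw [pickAux_succ] at h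
    cases hk : pickAux c n t E k with
    | some e' =>
      rw [hk] at h
      simp only [Option.casesOn] at h
      cases h
      obtain ⟨h1, h2, h3⟩ := ih hk
      exact ⟨h1, Nat.lt_succ_of_lt h2, h3⟩
    | none =>
      rw [hk] at h
      cases hp : predB c n t E k with
      | false => rw [hp] at h; simp at h
      | true =>
        rw [hp] at h
        simp only [cond_true, Option.some.injEq] at h
        subst h
        exact ⟨hp, Nat.lt_succ_self _, pickAux_none hk⟩

lemma pickAux_exists {c n t E k e} (he : e < k) (hp : predB c n t E e = true) :
    ∃ e', pickAux c n t E k = some e' := by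
  cases h : pickAux c n t E k with
  | none => rw [pickAux_none h e he] at hp; simp at hp
  | some e' => exact ⟨e', rfl⟩

def pick (c : Code) (n t : ℕ) (E : List ℕ) : Option ℕ := pickAux c n t E t

def stepF (c : Code) (t : ℕ) (E : List ℕ) : List ℕ :=
  cond (enterB c t.unpair.1 t.unpair.2)
    (Option.casesOn (pick c t.unpair.1 t E) E (fun e => e :: E)) E

def stateF (c : Code) : ℕ → List ℕ := fun t => Nat.rec [] (fun s E => stepF c s E) t

def act (c : Code) (t : ℕ) : Option ℕ :=
  cond (enterB c t.unpair.1 t.unpair.2) (pick c t.unpair.1 t (stateF c t)) none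

lemma stateF_succ (c : Code) (t : ℕ) :
    stateF c (t+1) = Option.casesOn (act c t) (stateF c t) (fun e => e :: stateF c t) := by
  show stepF c t (stateF c t) = _
  unfold stepF act
  cases enterB c t.unpair.1 t.unpair.2 <;> rfl

def assign (c : Code) (t : ℕ) : ℕ :=
  Option.casesOn (act c t) 0
    (fun e => cond ((evaln t (ofNat Code e) t.unpair.1).getD 0 == 0) 0 1)

def qB (c : Code) (i : ℕ) (n t : ℕ) : Bool :=
  (t.unpair.1 == n) && enterB c t.unpair.1 t.unpair.2 && (assign c t == i)

def As (c : Code) (i : ℕ) : Set ℕ := {n | ∃ t, qB c i n t = true}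

def noEnterBelow (c : Code) (n m : ℕ) : Bool :=
  Nat.rec true (fun s ih => ih && !enterB c n s) m

def negqB (c d : Code) (T : ℕ) (n k : ℕ) : Bool :=
  (evaln k d n).isSome && noEnterBelow c n (T + k)

lemma noEnterBelow_iff {c n m} : noEnterBelow c n m = true ↔ ∀ s < m, enterB c n s = false := by
  induction m with
  | zero => simp [noEnterBelow]
  | succ m ih =>
    show (noEnterBelow c n m && !enterB c n m) = true ↔ _
    rw [Bool.and_eq_true, ih]
    constructor
    · rintro ⟨h1, h2⟩ s hs
      rcases Nat.lt_succ_iff_lt_or_eq.1 hs with h | rfl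
      · exact h1 s h
      · simpa using h2
    · intro h
      exact ⟨fun s hs => h s (Nat.lt_succ_of_lt hs), by simp [h m (Nat.lt_succ_self m)]⟩


section Primrec

lemma enterB_primrec (c : Code) : Primrec₂ (enterB c) := by
  have h1 : Primrec fun p : ℕ × ℕ => (evaln (p.2+1) c p.1).isSome :=
    Primrec.option_isSome.comp
      (primrec_evaln.comp (((Primrec.succ.comp Primrec.snd).pair (Primrec.const c)).pair Primrec.fst))
  have h2 : Primrec fun p : ℕ × ℕ => !(evaln p.2 c p.1).isSome :=
    Primrec.not.comp (Primrec.option_isSome.comp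
      (primrec_evaln.comp ((Primrec.snd.pair (Primrec.const c)).pair Primrec.fst)))
  exact (Primrec.and.comp h1 h2).to₂

lemma memB_primrec : Primrec₂ memB := by
  have : Primrec fun p : ℕ × List ℕ =>
      p.2.foldr (fun b s => (b == p.1) || s) false :=
    Primrec.list_foldr Primrec.snd (Primrec.const false) <|
      Primrec.to₂ <| Primrec.or.comp
        (Primrec.beq.comp (Primrec.fst.comp Primrec.snd) (Primrec.fst.comp Primrec.fst))
        (Primrec.snd.comp Primrec.snd)
  exact this.to₂

lemma predB_primrec (c : Code) :
    Primrec fun x : ((ℕ × ℕ) × List ℕ) × ℕ => predB c x.1.1.1 x.1.1.2 x.1.2 x.2 := by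
  have hm : Primrec fun x : ((ℕ × ℕ) × List ℕ) × ℕ => !(memB x.2 x.1.2) :=
    Primrec.not.comp (memB_primrec.comp Primrec.snd (Primrec.snd.comp Primrec.fst))
  have he : Primrec fun x : ((ℕ × ℕ) × List ℕ) × ℕ =>
      (evaln x.1.1.2 (ofNat Code x.2) x.1.1.1).isSome :=
    Primrec.option_isSome.comp <| primrec_evaln.comp <|
      (((Primrec.snd.comp (Primrec.fst.comp Primrec.fst)).pair
        ((Primrec.ofNat Code).comp Primrec.snd)).pair
        (Primrec.fst.comp (Primrec.fst.comp Primrec.fst)))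
  exact Primrec.and.comp hm he

lemma pickAux_primrec (c : Code) :
    Primrec₂ fun (y : (ℕ × ℕ) × List ℕ) (k : ℕ) => pickAux c y.1.1 y.1.2 y.2 k := by
  have hh : Primrec₂ fun (y : (ℕ × ℕ) × List ℕ) (z : ℕ × Option ℕ) =>
      (Option.casesOn z.2
        (cond (predB c y.1.1 y.1.2 y.2 z.1) (some z.1) Option.none) some : Option ℕ) := by
    have hmap : Primrec fun w : ((ℕ × ℕ) × List ℕ) × ℕ × Option ℕ =>
        (w.1, w.2.1) := Primrec.fst.pair (Primrec.fst.comp Primrec.snd)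
    have hcond : Primrec fun w : ((ℕ × ℕ) × List ℕ) × ℕ × Option ℕ =>
        cond (predB c w.1.1.1 w.1.1.2 w.1.2 w.2.1) (some w.2.1) Option.none :=
      Primrec.cond (((predB_primrec c).comp hmap).of_eq fun w => rfl)
        (Primrec.option_some.comp (Primrec.fst.comp Primrec.snd)) (Primrec.const Option.none)
    have H : Primrec fun w : ((ℕ × ℕ) × List ℕ) × ℕ × Option ℕ =>
        (Option.casesOn w.2.2
          (cond (predB c w.1.1.1 w.1.1.2 w.1.2 w.2.1) (some w.2.1) Option.none) some : Option ℕ) :=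
      Primrec.option_casesOn (Primrec.snd.comp Primrec.snd) hcond
        ((Primrec.option_some.comp Primrec.snd).to₂ (α := ((ℕ × ℕ) × List ℕ) × ℕ × Option ℕ))
    exact H.to₂
  exact (Primrec.nat_rec (Primrec.const Option.none) hh).of_eq fun y k => rfl

lemma pick_primrec (c : Code) :
    Primrec fun y : (ℕ × ℕ) × List ℕ => pick c y.1.1 y.1.2 y.2 :=
  ((pickAux_primrec c).comp Primrec.id (Primrec.snd.comp Primrec.fst)).of_eq fun y => rfl

lemma stateF_primrec (c : Code) : Primrec (stateF c) := by
  have hstep : Primrec₂ (stepF c) := by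
    refine Primrec₂.of_eq ?_ (fun a b => rfl)
    refine Primrec.to₂ (f := fun p : ℕ × List ℕ => stepF c p.1 p.2) ?_
    unfold stepF
    have hc : Primrec fun p : ℕ × List ℕ => enterB c p.1.unpair.1 p.1.unpair.2 :=
      (enterB_primrec c).comp (Primrec.fst.comp (Primrec.unpair.comp Primrec.fst))
        (Primrec.snd.comp (Primrec.unpair.comp Primrec.fst))
    have hmap : Primrec fun p : ℕ × List ℕ => ((p.1.unpair.1, p.1), p.2) :=
      ((Primrec.fst.comp (Primrec.unpair.comp Primrec.fst)).pair Primrec.fst).pair Primrec.snd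
    have hp : Primrec fun p : ℕ × List ℕ => pick c p.1.unpair.1 p.1 p.2 :=
      ((pick_primrec c).comp hmap).of_eq fun p => rfl
    exact Primrec.cond hc
      (Primrec.option_casesOn hp Primrec.snd
        (Primrec.list_cons.comp Primrec.snd (Primrec.snd.comp Primrec.fst)).to₂)
      Primrec.snd
  exact Primrec.nat_rec₁ [] hstep

lemma act_primrec (c : Code) : Primrec (act c) := by
  have hmap : Primrec fun t : ℕ => ((t.unpair.1, t), stateF c t) :=
    ((Primrec.fst.comp Primrec.unpair).pair Primrec.id).pair (stateF_primrec c)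
  have hp : Primrec fun t : ℕ => pick c t.unpair.1 t (stateF c t) :=
    ((pick_primrec c).comp hmap).of_eq fun t => rfl
  exact Primrec.cond ((enterB_primrec c).comp
    (Primrec.fst.comp Primrec.unpair) (Primrec.snd.comp Primrec.unpair))
    hp (Primrec.const Option.none)

lemma assign_primrec (c : Code) : Primrec (assign c) := by
  have hev : Primrec fun p : ℕ × ℕ => evaln p.1 (ofNat Code p.2) p.1.unpair.1 :=
    primrec_evaln.comp <|
      (Primrec.fst.pair ((Primrec.ofNat Code).comp Primrec.snd)).pair
        (Primrec.fst.comp (Primrec.unpair.comp Primrec.fst))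
  have hin : Primrec fun p : ℕ × ℕ =>
      cond ((evaln p.1 (ofNat Code p.2) p.1.unpair.1).getD 0 == 0) 0 1 :=
    Primrec.cond (Primrec.beq.comp (Primrec.option_getD.comp hev (Primrec.const 0))
      (Primrec.const 0)) (Primrec.const 0) (Primrec.const 1)
  exact Primrec.option_casesOn (act_primrec c) (Primrec.const 0) hin.to₂

lemma qB_primrec (c : Code) (i : ℕ) : Primrec₂ (qB c i) := by
  refine Primrec₂.of_eq ?_ (fun a b => rfl)
  refine Primrec.to₂ (f := fun p : ℕ × ℕ => qB c i p.1 p.2) ?_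
  unfold qB
  have h1 : Primrec fun p : ℕ × ℕ => (p.2.unpair.1 == p.1) :=
    Primrec.beq.comp (Primrec.fst.comp (Primrec.unpair.comp Primrec.snd)) Primrec.fst
  have h2 : Primrec fun p : ℕ × ℕ => enterB c p.2.unpair.1 p.2.unpair.2 :=
    (enterB_primrec c).comp (Primrec.fst.comp (Primrec.unpair.comp Primrec.snd))
      (Primrec.snd.comp (Primrec.unpair.comp Primrec.snd))
  have h3 : Primrec fun p : ℕ × ℕ => (assign c p.2 == i) :=
    Primrec.beq.comp ((assign_primrec c).comp Primrec.snd) (Primrec.const i)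
  exact Primrec.and.comp (Primrec.and.comp h1 h2) h3

lemma noEnterBelow_primrec (c : Code) : Primrec₂ (noEnterBelow c) := by
  have hh : Primrec₂ fun (n : ℕ) (p : ℕ × Bool) => p.2 && !enterB c n p.1 :=
    Primrec.to₂ (Primrec.and.comp (Primrec.snd.comp Primrec.snd)
      (Primrec.not.comp ((enterB_primrec c).comp Primrec.fst
        (Primrec.fst.comp Primrec.snd))))
  exact (Primrec.nat_rec (Primrec.const true) hh).of_eq fun n m => rfl

lemma negqB_primrec (c d : Code) (T : ℕ) : Primrec₂ (negqB c d T) := by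
  refine Primrec₂.of_eq ?_ (fun a b => rfl)
  refine Primrec.to₂ (f := fun p : ℕ × ℕ => negqB c d T p.1 p.2) ?_
  unfold negqB
  have h1 : Primrec fun p : ℕ × ℕ => (evaln p.2 d p.1).isSome :=
    Primrec.option_isSome.comp
      (primrec_evaln.comp ((Primrec.snd.pair (Primrec.const d)).pair Primrec.fst))
  have h2 : Primrec fun p : ℕ × ℕ => noEnterBelow c p.1 (T + p.2) :=
    (noEnterBelow_primrec c).comp Primrec.fst
      (Primrec.nat_add.comp (Primrec.const T) Primrec.snd)
  exact Primrec.and.comp h1 h2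

end Primrec


section Lemmas

lemma evaln_zero' (c : Code) (n : ℕ) : evaln 0 c n = Option.none := by simp [evaln]

lemma enterB_unique {c : Code} {n s s' : ℕ} (h : enterB c n s = true)
    (h' : enterB c n s' = true) : s = s' := by
  have aux : ∀ {a b : ℕ}, enterB c n a = true → enterB c n b = true → a < b → False := by
    intro a b ha hb hab
    unfold enterB at ha hb
    rw [Bool.and_eq_true] at ha hb
    obtain ⟨x, hx⟩ := Option.isSome_iff_exists.1 ha.1
    have : x ∈ evaln b c n := evaln_mono hab hx
    rw [Option.mem_def] at this
    rw [this] at hb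
    simp at hb
  rcases lt_trichotomy s s' with h1 | h1 | h1
  · exact absurd (aux h h' h1) (by simp)
  · exact h1
  · exact absurd (aux h' h h1) (by simp)

lemma dom_iff_enter {c : Code} {n : ℕ} :
    (eval c n).Dom ↔ ∃ s, enterB c n s = true := by
  constructor
  · intro h
    obtain ⟨x, hx⟩ := Part.dom_iff_mem.1 h
    obtain ⟨k, hk⟩ := evaln_complete.1 hx
    have hex : ∃ k, (evaln k c n).isSome := ⟨k, by rw [Option.mem_def] at hk; simp [hk]⟩
    classical
    have hpos : 0 < Nat.find hex := by
      rcases Nat.eq_zero_or_pos (Nat.find hex) with h0 | h0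
      · have := Nat.find_spec hex
        rw [h0, evaln_zero'] at this
        simp at this
      · exact h0
    refine ⟨Nat.find hex - 1, ?_⟩
    unfold enterB
    rw [Bool.and_eq_true]
    constructor
    · have := Nat.find_spec hex
      rw [show Nat.find hex - 1 + 1 = Nat.find hex by omega]; exact this
    · have := Nat.find_min hex (show Nat.find hex - 1 < Nat.find hex by omega)
      simpa using this
  · rintro ⟨s, hs⟩
    unfold enterB at hs
    rw [Bool.and_eq_true] at hs
    obtain ⟨x, hx⟩ := Option.isSome_iff_exists.1 hs.1
    exact Part.dom_iff_mem.2 ⟨x, evaln_sound (Option.mem_def.2 hx)⟩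

end Lemmas


section Lemmas2

lemma stateF_mono_succ (c : Code) (t : ℕ) : stateF c t ⊆ stateF c (t+1) := by
  rw [stateF_succ]
  cases act c t with
  | none => exact fun e he => he
  | some e' => exact fun e he => List.mem_cons_of_mem _ he

lemma stateF_mono {c : Code} {s t : ℕ} (h : s ≤ t) : stateF c s ⊆ stateF c t := by
  induction t with
  | zero => rw [Nat.le_zero.1 h]; exact fun e he => he
  | succ t ih =>
    rcases Nat.lt_succ_iff_lt_or_eq.1 (Nat.lt_succ_of_le h) with h' | rfl
    · exact fun e he => stateF_mono_succ c t (ih (Nat.lt_succ_iff.1 h') he)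
    · exact fun e he => he

lemma new_mem {c : Code} {t e : ℕ} (h : e ∈ stateF c (t+1)) (h' : e ∉ stateF c t) :
    act c t = some e := by
  rw [stateF_succ] at h
  cases hact : act c t with
  | none => rw [hact] at h; exact absurd h h'
  | some e' =>
    rw [hact] at h
    rcases List.mem_cons.1 h with rfl | h
    · rfl
    · exact absurd h h'

lemma act_spec {c : Code} {t e : ℕ} (h : act c t = some e) :
    enterB c t.unpair.1 t.unpair.2 = true ∧ e ∉ stateF c t ∧
      ∃ v, evaln t (ofNat Code e) t.unpair.1 = some v ∧
        assign c t = (if v = 0 then 0 else 1) := by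
  unfold act at h
  cases henter : enterB c t.unpair.1 t.unpair.2 with
  | false => rw [henter] at h; simp at h
  | true =>
    rw [henter, cond_true] at h
    obtain ⟨hpred, _, _⟩ := pickAux_spec h
    unfold predB at hpred
    rw [Bool.and_eq_true] at hpred
    obtain ⟨hmem, hsome⟩ := hpred
    have hmem' : e ∉ stateF c t := by
      intro hc
      rw [(memB_iff).2 hc] at hmem
      simp at hmem
    obtain ⟨v, hv⟩ := Option.isSome_iff_exists.1 hsome
    refine ⟨rfl, hmem', v, hv, ?_⟩
    unfold assign act
    rw [henter, cond_true, h]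
    simp only [hv, Option.getD_some]
    cases heq : (v == 0) with
    | true =>
      have hv0 : v = 0 := by simpa using heq
      subst hv0
      simp
    | false =>
      have : v ≠ 0 := by simpa using heq
      simp [this]

lemma assign_cases (c : Code) (t : ℕ) : assign c t = 0 ∨ assign c t = 1 := by
  unfold assign
  cases act c t with
  | none => exact Or.inl rfl
  | some e =>
    cases h : (evaln t (ofNat Code e) t.unpair.1).getD 0 == 0
    · simp [h]
    · simp [h]

lemma satisfaction {c : Code} {t e : ℕ} (h : act c t = some e) :
    ∃ v, v ∈ eval (ofNat Code e) t.unpair.1 ∧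
      ((v = 0 ∧ t.unpair.1 ∈ As c 0) ∨ (v ≠ 0 ∧ t.unpair.1 ∈ As c 1)) := by
  obtain ⟨henter, _, v, hv, hassign⟩ := act_spec h
  refine ⟨v, evaln_sound (Option.mem_def.2 hv), ?_⟩
  by_cases hv0 : v = 0
  · refine Or.inl ⟨hv0, t, ?_⟩
    unfold qB
    rw [hassign]
    simp [henter, hv0]
  · refine Or.inr ⟨hv0, t, ?_⟩
    unfold qB
    rw [hassign]
    simp [henter, hv0]

lemma stab (c : Code) (k : ℕ) :
    ∃ T, ∀ t, T ≤ t → ∀ e < k, (e ∈ stateF c t ↔ e ∈ stateF c T) := by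
  induction k with
  | zero => exact ⟨0, fun t _ e he => absurd he (Nat.not_lt_zero e)⟩
  | succ k ih =>
    obtain ⟨T, hT⟩ := ih
    by_cases h : ∃ t, k ∈ stateF c t
    · obtain ⟨t₀, ht₀⟩ := h
      refine ⟨max T t₀, fun t ht e he => ?_⟩
      rcases Nat.lt_succ_iff_lt_or_eq.1 he with h' | rfl
      · rw [hT t (le_trans (le_max_left _ _) ht) e h',
          hT (max T t₀) (le_max_left _ _) e h']
      · constructor
        · intro _; exact stateF_mono (le_max_right _ _) ht₀
        · intro _; exact stateF_mono (le_trans (le_max_right _ _) ht) ht₀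
    · refine ⟨T, fun t ht e he => ?_⟩
      rcases Nat.lt_succ_iff_lt_or_eq.1 he with h' | rfl
      · exact hT t ht e h'
      · constructor
        · intro hc; exact absurd ⟨t, hc⟩ h
        · intro hc; exact absurd ⟨T, hc⟩ h

/-- If requirement `e` is never satisfied, then after the stabilization stage no real
entry event can have `evaln` converge on code `e`. -/
lemma crucial {c : Code} {e T : ℕ}
    (hnever : ∀ t, e ∉ stateF c t)
    (hT : ∀ t, T ≤ t → ∀ e' < e + 1, (e' ∈ stateF c t ↔ e' ∈ stateF c T))
    {t : ℕ} (ht : T ≤ t) (het : e < t)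
    (henter : enterB c t.unpair.1 t.unpair.2 = true) :
    evaln t (ofNat Code e) t.unpair.1 = Option.none := by
  by_contra hne
  have hsome : (evaln t (ofNat Code e) t.unpair.1).isSome := by
    rcases Option.eq_none_or_eq_some (evaln t (ofNat Code e) t.unpair.1) with h | ⟨v, h⟩
    · exact absurd h hne
    · simp [h]
  have hpred : predB c t.unpair.1 t (stateF c t) e = true := by
    unfold predB
    rw [Bool.and_eq_true]
    refine ⟨?_, hsome⟩
    rw [Bool.not_eq_true']
    rw [← Bool.not_eq_true]
    intro hmem
    exact hnever t ((memB_iff).1 hmem)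
  obtain ⟨e'', hpick⟩ := pickAux_exists het hpred
  have hact : act c t = some e'' := by
    unfold act
    rw [henter, cond_true]
    exact hpick
  obtain ⟨hp'', _, hmin⟩ := pickAux_spec hpick
  have he''le : e'' ≤ e := by
    by_contra hgt
    rw [hmin e (Nat.lt_of_not_le hgt)] at hpred
    simp at hpred
  have hnotmem : e'' ∉ stateF c t := (act_spec hact).2.1
  have hmem1 : e'' ∈ stateF c (t+1) := by
    rw [stateF_succ, hact]
    exact List.mem_cons_self
  have h1 := hT t ht e'' (Nat.lt_succ_of_le he''le)
  have h2 := hT (t+1) (le_trans ht (Nat.le_succ t)) e'' (Nat.lt_succ_of_le he''le)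
  rw [h2] at hmem1
  rw [← h1] at hmem1
  exact hnotmem hmem1

end Lemmas2


section Main

lemma rfind_partrec {q : ℕ → ℕ → Bool} (hq : Computable₂ q) :
    Partrec fun n => Nat.rfind fun t => Part.some (q n t) :=
  (Partrec.rfind hq.partrec₂).of_eq fun n => rfl

lemma rfind_dom_iff {q : ℕ → ℕ → Bool} (n : ℕ) :
    (Nat.rfind fun t => Part.some (q n t)).Dom ↔ ∃ t, q n t = true := by
  refine (Nat.rfind_dom (p := fun t => Part.some (q n t))).trans ?_
  constructor
  · rintro ⟨t, ht, -⟩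
    exact ⟨t, (Part.mem_some_iff.1 ht).symm⟩
  · rintro ⟨t, ht⟩
    exact ⟨t, Part.mem_some_iff.2 ht.symm, fun {m} _ => trivial⟩

lemma ce_of_exists {q : ℕ → ℕ → Bool} (hq : Computable₂ q) :
    CE {n | ∃ t, q n t = true} := by
  refine ⟨fun n => Nat.rfind fun t => Part.some (q n t), rfind_partrec hq, fun n => ?_⟩
  rw [Set.mem_setOf_eq, rfind_dom_iff]

lemma rePred_of_exists {q : ℕ → ℕ → Bool} (hq : Computable₂ q) :
    REPred fun n => ∃ t, q n t = true :=
  (rfind_partrec hq).dom_re.of_eq fun n => rfind_dom_iff n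

end Main

end Stmt15Aux

open Stmt15Aux Nat.Partrec Nat.Partrec.Code Denumerable in
theorem stmt15 (A : Set ℕ) (hA : CE A) (hA' : ¬ ComputablePred (· ∈ A)) :
    ∃ A₀ A₁ : Set ℕ, CE A₀ ∧ CE A₁ ∧ A₀ ∩ A₁ = ∅ ∧ A₀ ∪ A₁ = A ∧ RecInsep A₀ A₁ := by
  obtain ⟨f, hf, hfd⟩ := hA
  obtain ⟨c, hc⟩ := exists_code.1 (Partrec.nat_iff.1 hf)
  have hAc : ∀ n, n ∈ A ↔ (eval c n).Dom := fun n => by rw [hfd n, hc]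
  refine ⟨As c 0, As c 1, ce_of_exists ((qB_primrec c 0).to_comp),
    ce_of_exists ((qB_primrec c 1).to_comp), ?_, ?_, ?_⟩
  · -- disjointness
    rw [Set.eq_empty_iff_forall_notMem]
    rintro n ⟨⟨t, h0⟩, ⟨t', h1⟩⟩
    unfold qB at h0 h1
    simp only [Bool.and_eq_true, beq_iff_eq] at h0 h1
    obtain ⟨⟨he0, hs0⟩, ha0⟩ := h0
    obtain ⟨⟨he1, hs1⟩, ha1⟩ := h1
    have hss : t.unpair.2 = t'.unpair.2 :=
      enterB_unique (by rwa [he0] at hs0) (by rwa [he1] at hs1)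
    have htt : t = t' := by
      rw [← Nat.pair_unpair t, ← Nat.pair_unpair t', he0, he1, hss]
    rw [htt, ha1] at ha0
    exact one_ne_zero ha0
  · -- union
    ext n
    constructor
    · rintro (⟨t, h⟩ | ⟨t, h⟩) <;>
      · unfold qB at h
        simp only [Bool.and_eq_true, beq_iff_eq] at h
        rw [hAc, dom_iff_enter]
        exact ⟨t.unpair.2, by rw [← h.1.1]; exact h.1.2⟩
    · intro hn
      obtain ⟨s, hs⟩ := dom_iff_enter.1 ((hAc n).1 hn)
      rcases assign_cases c (Nat.pair n s) with h | h
      · exact Or.inl ⟨Nat.pair n s, by unfold qB; simp [Nat.unpair_pair, hs, h]⟩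
      · exact Or.inr ⟨Nat.pair n s, by unfold qB; simp [Nat.unpair_pair, hs, h]⟩
  · -- recursive inseparability
    rintro ⟨D, hD, hsub, hdisj⟩
    obtain ⟨χ, hχ, hpD⟩ := ComputablePred.computable_iff.1 hD
    have hmemD : ∀ n, n ∈ D ↔ χ n = true := fun n => iff_of_eq (congrFun hpD n)
    have hgc : Computable (fun n => cond (χ n) 1 0 : ℕ → ℕ) :=
      Computable.cond hχ (Computable.const 1) (Computable.const 0)
    obtain ⟨d, hd⟩ := exists_code.1 (Partrec.nat_iff.1 hgc)
    set e := Encodable.encode d with hedef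
    have hofNat : ofNat Code e = d := Denumerable.ofNat_encode d
    have heval : ∀ n, eval d n = Part.some (cond (χ n) 1 0) := fun n => by rw [hd]; rfl
    -- requirement e is never satisfied
    have hnever : ∀ t, e ∉ stateF c t := by
      intro t
      induction t with
      | zero => exact List.not_mem_nil
      | succ t ih =>
        intro hmem
        have hact := new_mem hmem ih
        obtain ⟨v, hv, hcase⟩ := satisfaction hact
        rw [hofNat, heval] at hv
        have hveq : v = cond (χ t.unpair.1) 1 0 := Part.mem_some_iff.1 hv
        rcases hcase with ⟨h0, hin0⟩ | ⟨h1, hin1⟩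
        · -- v = 0, so χ n = false, n ∉ D; but n ∈ A₀ ⊆ D
          have hχf : χ t.unpair.1 = false := by
            cases hx : χ t.unpair.1
            · rfl
            · rw [hx, cond_true] at hveq; rw [h0] at hveq; exact absurd hveq.symm one_ne_zero
          have hD1 : t.unpair.1 ∈ D := hsub hin0
          rw [hmemD, hχf] at hD1
          exact Bool.false_ne_true hD1
        · -- v ≠ 0, so χ n = true, n ∈ D, but n ∈ A₁ and A₁ ∩ D = ∅
          have hχt : χ t.unpair.1 = true := by
            cases hx : χ t.unpair.1
            · rw [hx, cond_false] at hveq; exact absurd hveq h1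
            · rfl
          have : t.unpair.1 ∈ As c 1 ∩ D := ⟨hin1, (hmemD _).2 hχt⟩
          rw [hdisj] at this
          exact this
    obtain ⟨T, hT⟩ := stab c (e+1)
    -- A is r.e.
    have hreA : REPred (· ∈ A) := by
      refine (rePred_of_exists (enterB_primrec c).to_comp).of_eq fun n => ?_
      rw [hAc n, dom_iff_enter]
    -- the complement of A is r.e.
    have hreNA : REPred (fun n => ¬ n ∈ A) := by
      refine (rePred_of_exists (negqB_primrec c d (T + e + 2)).to_comp).of_eq fun n => ?_
      unfold negqB
      constructor
      · -- ∃ k, negqB → n ∉ A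
        rintro ⟨k, hk⟩ hn
        rw [Bool.and_eq_true, noEnterBelow_iff] at hk
        obtain ⟨hksome, hnoent⟩ := hk
        obtain ⟨s, hs⟩ := dom_iff_enter.1 ((hAc n).1 hn)
        have hsbig : T + e + 2 + k ≤ s := by
          by_contra hlt
          rw [hnoent s (by omega)] at hs
          exact Bool.false_ne_true hs
        have hst : s ≤ Nat.pair n s := Nat.right_le_pair n s
        have hcru : evaln (Nat.pair n s) (ofNat Code e) (Nat.pair n s).unpair.1
            = Option.none := by
          refine crucial hnever hT (by omega) (by omega) ?_
          rw [Nat.unpair_pair]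
          exact hs
        rw [hofNat, Nat.unpair_pair] at hcru
        obtain ⟨x, hx⟩ := Option.isSome_iff_exists.1 hksome
        have : x ∈ evaln (Nat.pair n s) d n :=
          evaln_mono (by omega) (Option.mem_def.2 hx)
        rw [Option.mem_def, hcru] at this
        exact Option.some_ne_none x this.symm
      · -- n ∉ A → ∃ k, negqB
        intro hn
        have hnoent : ∀ s, enterB c n s = false := by
          intro s
          cases hx : enterB c n s
          · rfl
          · exact absurd ((hAc n).2 (dom_iff_enter.2 ⟨s, hx⟩)) hn
        have : cond (χ n) 1 0 ∈ eval d n := by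
          rw [heval]; exact Part.mem_some _
        obtain ⟨k, hk⟩ := evaln_complete.1 this
        refine ⟨k, ?_⟩
        rw [Bool.and_eq_true, noEnterBelow_iff]
        exact ⟨by rw [Option.mem_def] at hk; simp [hk], fun s _ => hnoent s⟩
    exact hA' (ComputablePred.computable_iff_re_compl_re'.2 ⟨hreA, hreNA⟩)
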